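/- Let A be a po-semiring satisfying condition (C1) in which ACC holds for elements of A (there is no infinite strictly ascending chain of elements). Then A has only finitely many maximal elements. -/

import Mathlib

/-- A po-semiring: a commutative semiring equipped with a compatible partial order
such that 0 is the least and 1 is the greatest element. -/
class PoSemiring (A : Type*) extends CommSemiring A, PartialOrder A where
  add_right_mono : ∀ x y z : A, x ≤ y → x + z ≤ y + z
  mul_left_mono : ∀ x y z : A, (0 : A) ≤ x → y ≤ z → x * y ≤ x * z
  zero_le_elem : ∀ x : A, (0 : A) ≤ x
  le_one_elem : ∀ x : A, x ≤ (1 : A)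

/-- A maximal element of a po-semiring. -/
def IsMaximalElem {A : Type*} [PoSemiring A] (m : A) : Prop :=
  m ≠ 1 ∧ ∀ x : A, m ≤ x → x < 1 → m = x

/-- A prime element of a po-semiring. -/
def IsPrimeElem {A : Type*} [PoSemiring A] (p : A) : Prop :=
  p ≠ 1 ∧ ∀ x y : A, x * y ≤ p → x ≤ p ∨ y ≤ p

/-- The set `Z(A)` of nonzero zero divisors of a po-semiring. -/
def zdSet (A : Type*) [PoSemiring A] : Set A :=
  {a | a ≠ 0 ∧ ∃ b : A, b ≠ 0 ∧ a * b = 0}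

/-- Condition (C1): each non-nilpotent element lies above a nonzero idempotent
having an orthogonal idempotent complement. -/
def CondC1 (A : Type*) [PoSemiring A] : Prop :=
  ∀ u : A, ¬ IsNilpotent u →
    ∃ w v : A, w ≠ 0 ∧ w * w = w ∧ v * v = v ∧ w ≤ u ∧ w + v = 1 ∧ w * v = 0

/-- Condition (C2): each nonzero idempotent lies above a nonzero idempotent
having an orthogonal idempotent complement. -/
def CondC2 (A : Type*) [PoSemiring A] : Prop :=
  ∀ u : A, u ≠ 0 → u * u = u →
    ∃ w v : A, w ≠ 0 ∧ w * w = w ∧ v * v = v ∧ w ≤ u ∧ w + v = 1 ∧ w * v = 0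

/-- `A` contains no infinite set of orthogonal idempotents. -/
def NoInfiniteOrthogonalIdempotents (A : Type*) [PoSemiring A] : Prop :=
  ∀ S : Set A, (∀ e ∈ S, e ≠ 0 ∧ e * e = e) →
    (∀ e ∈ S, ∀ f ∈ S, e ≠ f → e * f = 0) → S.Finite

/-- DCC for elements: no infinite strictly descending chain. -/
def ElemDCC (A : Type*) [PoSemiring A] : Prop :=
  ¬ ∃ f : ℕ → A, ∀ n : ℕ, f (n + 1) < f n

/-- ACC for elements: no infinite strictly ascending chain. -/
def ElemACC (A : Type*) [PoSemiring A] : Prop :=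
  ¬ ∃ f : ℕ → A, ∀ n : ℕ, f n < f (n + 1)

section Aux

variable {A : Type*} [PoSemiring A]

lemma ps_le_add_left (a b : A) : a ≤ b + a := by
  have := PoSemiring.add_right_mono (0 : A) b a (PoSemiring.zero_le_elem b)
  simpa using this

lemma ps_le_add_right (a b : A) : a ≤ a + b := by
  rw [add_comm]; exact ps_le_add_left a b

lemma ps_add_le_add {a b c d : A} (h1 : a ≤ b) (h2 : c ≤ d) : a + c ≤ b + d :=
  calc a + c ≤ b + c := PoSemiring.add_right_mono _ _ _ h1
  _ = c + b := add_comm _ _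
  _ ≤ d + b := PoSemiring.add_right_mono _ _ _ h2
  _ = b + d := add_comm _ _

lemma ps_one_add_one : (1 : A) + 1 = 1 :=
  le_antisymm (PoSemiring.le_one_elem _) (ps_le_add_right 1 1)

lemma ps_add_self (a : A) : a + a = a := by
  calc a + a = a * 1 + a * 1 := by rw [mul_one]
  _ = a * (1 + 1) := (mul_add a 1 1).symm
  _ = a := by rw [ps_one_add_one, mul_one]

lemma ps_mul_le_left (a b : A) : a * b ≤ a := by
  have := PoSemiring.mul_left_mono a b 1 (PoSemiring.zero_le_elem a)
    (PoSemiring.le_one_elem b)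
  simpa using this

lemma ps_mul_le_right (a b : A) : a * b ≤ b := by
  rw [mul_comm]; exact ps_mul_le_left b a

lemma ps_mul_le_mul_left (a : A) {b c : A} (h : b ≤ c) : a * b ≤ a * c :=
  PoSemiring.mul_left_mono a b c (PoSemiring.zero_le_elem a) h

lemma ps_eq_zero_of_le_zero {a : A} (h : a ≤ 0) : a = 0 :=
  le_antisymm h (PoSemiring.zero_le_elem a)

lemma ps_lt_one {m : A} (h : m ≠ 1) : m < 1 :=
  lt_of_le_of_ne (PoSemiring.le_one_elem m) h

lemma maximal_prime {m : A} (hm : IsMaximalElem m) : IsPrimeElem m := by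
  refine ⟨hm.1, fun x y hxy => ?_⟩
  by_cases hx : x ≤ m
  · exact Or.inl hx
  right
  have hne : m + x ≠ m := fun h => hx (le_trans (ps_le_add_left x m) h.le)
  have h1 : m + x = 1 := by
    by_contra hne1
    exact hne (hm.2 (m + x) (ps_le_add_right m x) (ps_lt_one hne1)).symm
  calc y = y * (m + x) := by rw [h1, mul_one]
  _ = y * m + y * x := mul_add y m x
  _ ≤ m + m := ps_add_le_add (ps_mul_le_right y m) (by rw [mul_comm]; exact hxy)
  _ = m := ps_add_self m

lemma le_prime_of_pow_le {p : A} (hp : IsPrimeElem p) :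
    ∀ k, ∀ x : A, x ^ k ≤ p → x ≤ p := by
  intro k
  induction k with
  | zero =>
    intro x h
    exact absurd (le_antisymm (PoSemiring.le_one_elem p) (by simpa using h)) hp.1
  | succ n ih =>
    intro x h
    rw [pow_succ] at h
    rcases hp.2 _ _ h with h1 | h1
    · exact ih x h1
    · exact h1

lemma nilpotent_le_prime {p x : A} (hp : IsPrimeElem p) (hx : IsNilpotent x) : x ≤ p := by
  obtain ⟨k, hk⟩ := hx
  refine le_prime_of_pow_le hp k x ?_
  rw [hk]; exact PoSemiring.zero_le_elem p

lemma not_le_of_maximal_ne {m m' : A} (hm : IsMaximalElem m) (hm' : IsMaximalElem m')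
    (h : m ≠ m') : ¬ m ≤ m' :=
  fun hle => h (hm.2 m' hle (ps_lt_one hm'.1))

/-- The invariant for the recursive construction: an orthogonal idempotent
decomposition `e + c = 1` such that infinitely many maximal elements lie above `c`. -/
def GoodPair (e c : A) : Prop :=
  e * e = e ∧ c * c = c ∧ e + c = 1 ∧ e * c = 0 ∧
    {m : A | IsMaximalElem m ∧ c ≤ m}.Infinite

lemma goodPair_step (hC1 : CondC1 A) {e c : A} (h : GoodPair e c) :
    ∃ e' c' : A, GoodPair e' c' ∧ c < c' := by
  obtain ⟨hee, hcc, hec1, hec0, hinf⟩ := h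
  obtain ⟨m, hm⟩ := hinf.nonempty
  obtain ⟨m', hm'mem⟩ := (hinf.diff (Set.finite_singleton m)).nonempty
  obtain ⟨hm', hm'ne⟩ := hm'mem
  have hm'ne : m' ≠ m := by simpa using hm'ne
  have hprime' : IsPrimeElem m' := maximal_prime hm'.1
  -- e * m is not nilpotent
  have hnil : ¬ IsNilpotent (e * m) := by
    intro hn
    have h1 : e * m ≤ m' := nilpotent_le_prime hprime' hn
    rcases hprime'.2 e m h1 with h2 | h2
    · have h3 : (1 : A) ≤ m' := by
        calc (1 : A) = e + c := hec1.symm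
        _ ≤ m' + m' := ps_add_le_add h2 hm'.2
        _ = m' := ps_add_self m'
      exact hm'.1.1 (le_antisymm (PoSemiring.le_one_elem m') h3)
    · exact not_le_of_maximal_ne hm.1 hm'.1 (fun h => hm'ne h.symm) h2
  obtain ⟨w, v, hw0, hww, hvv, hwem, hwv1, hwv0⟩ := hC1 (e * m) hnil
  have hwe : w ≤ e := hwem.trans (ps_mul_le_left e m)
  have hwm : w ≤ m := hwem.trans (ps_mul_le_right e m)
  have hcw : c * w = 0 := by
    apply ps_eq_zero_of_le_zero
    calc c * w ≤ c * e := ps_mul_le_mul_left c hwe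
    _ = e * c := mul_comm c e
    _ = 0 := hec0
  have hew : e * w = w := by
    apply le_antisymm (ps_mul_le_right e w)
    calc w = w * w := hww.symm
    _ ≤ w * e := ps_mul_le_mul_left w hwe
    _ = e * w := mul_comm w e
  -- split the maximal elements above c according to w or v
  have hcover : {m'' : A | IsMaximalElem m'' ∧ c ≤ m''} ⊆
      {m'' : A | (IsMaximalElem m'' ∧ c ≤ m'') ∧ w ≤ m''} ∪
      {m'' : A | (IsMaximalElem m'' ∧ c ≤ m'') ∧ v ≤ m''} := by
    intro x hx
    have hwvx : w * v ≤ x := by rw [hwv0]; exact PoSemiring.zero_le_elem x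
    rcases (maximal_prime hx.1).2 w v hwvx with h1 | h1
    · exact Or.inl ⟨hx, h1⟩
    · exact Or.inr ⟨hx, h1⟩
  have hsplit : {m'' : A | (IsMaximalElem m'' ∧ c ≤ m'') ∧ w ≤ m''}.Infinite ∨
      {m'' : A | (IsMaximalElem m'' ∧ c ≤ m'') ∧ v ≤ m''}.Infinite := by
    by_contra hboth
    push_neg at hboth
    exact hinf ((hboth.1.union hboth.2).subset hcover)
  rcases hsplit with hSw | hSv
  · -- new pair: (e * v, c + w)
    refine ⟨e * v, c + w, ⟨?_, ?_, ?_, ?_, ?_⟩, ?_⟩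
    · calc e * v * (e * v) = (e * e) * (v * v) := by ring
      _ = e * v := by rw [hee, hvv]
    · have hwc : w * c = 0 := by rw [mul_comm]; exact hcw
      calc (c + w) * (c + w) = c * c + c * w + w * c + w * w := by ring
      _ = c + w := by rw [hcc, hcw, hwc, hww]; simp
    · have hE : e = w + e * v := by
        calc e = e * (w + v) := by rw [hwv1, mul_one]
        _ = e * w + e * v := mul_add e w v
        _ = w + e * v := by rw [hew]
      calc e * v + (c + w) = w + e * v + c := by ring
      _ = e + c := by rw [← hE]
      _ = 1 := hec1
    · calc e * v * (c + w) = (e * c) * v + (w * v) * e := by ring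
      _ = 0 := by rw [hec0, hwv0]; ring
    · apply Set.Infinite.mono _ hSw
      intro x hx
      refine ⟨hx.1.1, ?_⟩
      calc c + w ≤ x + x := ps_add_le_add hx.1.2 hx.2
      _ = x := ps_add_self x
    · refine lt_of_le_of_ne (ps_le_add_right c w) ?_
      intro hEq
      have h1 : w * (c + w) = w := by
        calc w * (c + w) = w * c + w * w := mul_add w c w
        _ = c * w + w := by rw [mul_comm w c, hww]
        _ = 0 + w := by rw [hcw]
        _ = w := zero_add w
      rw [← hEq] at h1
      have h2 : w * c = 0 := by rw [mul_comm]; exact hcw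
      exact hw0 (by rw [← h1, h2])
  · -- new pair: (w, v)
    refine ⟨w, v, ⟨hww, hvv, hwv1, hwv0, ?_⟩, ?_⟩
    · apply Set.Infinite.mono _ hSv
      intro x hx
      exact ⟨hx.1.1, hx.2⟩
    · have hcv : c ≤ v := by
        calc c = c * (w + v) := by rw [hwv1, mul_one]
        _ = c * w + c * v := mul_add c w v
        _ = c * v := by rw [hcw, zero_add]
        _ ≤ v := ps_mul_le_right c v
      refine lt_of_le_of_ne hcv ?_
      intro hEq
      have hEw : e = w := by
        calc e = e * (w + v) := by rw [hwv1, mul_one]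
        _ = e * w + e * v := mul_add e w v
        _ = w + e * c := by rw [hew, hEq]
        _ = w + 0 := by rw [hec0]
        _ = w := add_zero w
      have h1 : (1 : A) ≤ m := by
        calc (1 : A) = e + c := hec1.symm
        _ ≤ m + m := ps_add_le_add (hEw ▸ hwm) hm.2
        _ = m := ps_add_self m
      exact hm.1.1 (le_antisymm (PoSemiring.le_one_elem m) h1)

end Aux

theorem finitely_many_maximal_elems_of_condC1_acc {A : Type*} [PoSemiring A] [Nontrivial A]
    (hC1 : CondC1 A) (hacc : ElemACC A) :
    {m : A | IsMaximalElem m}.Finite := by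
  by_contra hfin
  have hinf : {m : A | IsMaximalElem m}.Infinite := hfin
  have h0 : GoodPair (1 : A) (0 : A) := by
    refine ⟨one_mul 1, mul_zero 0, add_zero 1, mul_zero 1, ?_⟩
    apply hinf.mono
    intro x hx
    exact ⟨hx, PoSemiring.zero_le_elem x⟩
  have key : ∀ p : {p : A × A // GoodPair p.1 p.2},
      ∃ q : {p : A × A // GoodPair p.1 p.2}, p.1.2 < q.1.2 := by
    rintro ⟨⟨e, c⟩, hp⟩
    obtain ⟨e', c', hq, hlt⟩ := goodPair_step hC1 hp
    exact ⟨⟨(e', c'), hq⟩, hlt⟩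
  choose g hg using key
  apply hacc
  refine ⟨fun n => ((g^[n] ⟨(1, 0), h0⟩ : {p : A × A // GoodPair p.1 p.2})).1.2, fun n => ?_⟩
  show ((g^[n] ⟨(1, 0), h0⟩ : {p : A × A // GoodPair p.1 p.2})).1.2
    < ((g^[n+1] ⟨(1, 0), h0⟩ : {p : A × A // GoodPair p.1 p.2})).1.2
  rw [Function.iterate_succ_apply']
  exact hg _
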